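/- For every R > 0, the set {γ_k(R) : k ≥ 2} is bounded above, and its supremum γ*(R) := sup{γ_k(R) : k ≥ 2} is finite and strictly positive. -/

import Mathlib

/-- The modified Bessel function of the first kind of order `m`:
`I_m(r) = ∑ (r/2)^(m+2n) / (n! Γ(m+n+1))`. -/
noncomputable def besselI (m r : ℝ) : ℝ :=
  ∑' n : ℕ, (r / 2) ^ (m + 2 * (n : ℝ)) / ((n.factorial : ℝ) * Real.Gamma (m + (n : ℝ) + 1))

noncomputable def bterm (m R : ℝ) (n : ℕ) : ℝ :=
  (R / 2) ^ (m + 2 * (n : ℝ)) / ((n.factorial : ℝ) * Real.Gamma (m + (n : ℝ) + 1))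

lemma besselI_eq (m R : ℝ) : besselI m R = ∑' n, bterm m R n := rfl

lemma gamma_fact {m : ℝ} (hm : 0 ≤ m) (n : ℕ) :
    (n.factorial : ℝ) * Real.Gamma (m + 1) ≤ Real.Gamma (m + (n : ℝ) + 1) := by
  induction n with
  | zero => simp
  | succ n ih =>
    have h1 : (0:ℝ) < m + (n:ℝ) + 1 := by positivity
    have hG : 0 < Real.Gamma (m + (n:ℝ) + 1) := Real.Gamma_pos_of_pos h1
    have h2 : Real.Gamma (m + ((n:ℕ)+1 : ℕ) + 1) = (m + n + 1) * Real.Gamma (m + (n:ℝ) + 1) := by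
      push_cast
      rw [show m + ((n:ℝ) + 1) + 1 = (m + (n:ℝ) + 1) + 1 by ring, Real.Gamma_add_one h1.ne']
    rw [h2]
    have : (((n+1 : ℕ)).factorial : ℝ) = ((n:ℝ)+1) * n.factorial := by
      push_cast [Nat.factorial_succ]; ring
    rw [this]
    have hfact : (0:ℝ) ≤ (n.factorial : ℝ) * Real.Gamma (m+1) := by
      have := Real.Gamma_pos_of_pos (show (0:ℝ) < m + 1 by linarith)
      positivity
    calc ((n:ℝ)+1) * n.factorial * Real.Gamma (m+1)
        = ((n:ℝ)+1) * ((n.factorial:ℝ) * Real.Gamma (m+1)) := by ring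
      _ ≤ ((n:ℝ)+1) * Real.Gamma (m + (n:ℝ) + 1) := by
          apply mul_le_mul_of_nonneg_left ih (by positivity)
      _ ≤ (m + (n:ℝ) + 1) * Real.Gamma (m + (n:ℝ) + 1) := by
          apply mul_le_mul_of_nonneg_right (by linarith) hG.le

lemma bterm_pos {m R : ℝ} (hm : 0 ≤ m) (hR : 0 < R) (n : ℕ) : 0 < bterm m R n := by
  unfold bterm
  have h1 : (0:ℝ) < (R/2) ^ (m + 2*(n:ℝ)) := Real.rpow_pos_of_pos (by linarith) _
  have h2 : (0:ℝ) < Real.Gamma (m + (n:ℝ) + 1) := Real.Gamma_pos_of_pos (by positivity)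
  have h3 : (0:ℝ) < (n.factorial : ℝ) := by exact_mod_cast n.factorial_pos
  positivity

lemma bterm_le {m R : ℝ} (hm : 0 ≤ m) (hR : 0 < R) (n : ℕ) :
    bterm m R n ≤ ((R/2) ^ m / Real.Gamma (m+1)) * (((R/2)^2)^n / n.factorial) := by
  have hbase : (0:ℝ) < R/2 := by linarith
  have hGm : 0 < Real.Gamma (m+1) := Real.Gamma_pos_of_pos (by linarith)
  have hG : 0 < Real.Gamma (m + (n:ℝ) + 1) := Real.Gamma_pos_of_pos (by positivity)
  have h3 : (0:ℝ) < (n.factorial : ℝ) := by exact_mod_cast n.factorial_pos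
  have h1 : (1:ℝ) ≤ (n.factorial : ℝ) := by exact_mod_cast n.factorial_pos
  have hnum : (R/2) ^ (m + 2*(n:ℝ)) = (R/2) ^ m * ((R/2)^2)^n := by
    rw [show m + 2*(n:ℝ) = m + ((2*n : ℕ):ℝ) by push_cast; ring,
      Real.rpow_add hbase, Real.rpow_natCast, pow_mul]
  have hnumpos : (0:ℝ) < (R/2) ^ m * ((R/2)^2)^n := by
    have := Real.rpow_pos_of_pos hbase m; positivity
  unfold bterm
  rw [hnum]
  have hrhs : ((R/2)^m / Real.Gamma (m+1)) * (((R/2)^2)^n / n.factorial)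
      = ((R/2)^m * ((R/2)^2)^n) / (Real.Gamma (m+1) * n.factorial) := by
    field_simp
  rw [hrhs]
  apply div_le_div_of_nonneg_left hnumpos.le (by positivity)
  nlinarith [gamma_fact hm n]

lemma bterm_summable {m R : ℝ} (hm : 0 ≤ m) (hR : 0 < R) : Summable (bterm m R) := by
  apply Summable.of_nonneg_of_le (fun n => (bterm_pos hm hR n).le) (bterm_le hm hR)
  simpa [div_eq_mul_inv, mul_div_assoc] using
    (Real.summable_pow_div_factorial ((R/2)^2)).mul_left ((R/2) ^ m / Real.Gamma (m+1))

lemma besselI_pos {m R : ℝ} (hm : 0 ≤ m) (hR : 0 < R) : 0 < besselI m R := by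
  rw [besselI_eq]
  exact Summable.tsum_pos (bterm_summable hm hR) (fun n => (bterm_pos hm hR n).le) 0 (bterm_pos hm hR 0)

lemma bterm_succ {m R : ℝ} (hm : 0 ≤ m) (hR : 0 < R) (n : ℕ) :
    bterm (m+1) R n = bterm m R n * ((R/2) / (m + n + 1)) := by
  have hbase : (0:ℝ) < R/2 := by linarith
  have h1 : (0:ℝ) < m + (n:ℝ) + 1 := by positivity
  have hG : 0 < Real.Gamma (m + (n:ℝ) + 1) := Real.Gamma_pos_of_pos h1
  have h3 : (0:ℝ) < (n.factorial : ℝ) := by exact_mod_cast n.factorial_pos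
  unfold bterm
  rw [show m + 1 + 2*(n:ℝ) = (m + 2*(n:ℝ)) + 1 by ring, Real.rpow_add hbase, Real.rpow_one,
    show m + 1 + (n:ℝ) + 1 = (m + (n:ℝ) + 1) + 1 by ring, Real.Gamma_add_one h1.ne']
  field_simp

lemma besselI_succ_le {m R : ℝ} (hm : 0 ≤ m) (hR : 0 < R) :
    besselI (m+1) R ≤ (R/2)/(m+1) * besselI m R := by
  have hbase : (0:ℝ) < R/2 := by linarith
  rw [besselI_eq, besselI_eq, ← tsum_mul_left]
  apply Summable.tsum_le_tsum _ (bterm_summable (by linarith) hR)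
    ((bterm_summable hm hR).mul_left _)
  intro n
  rw [bterm_succ hm hR n]
  have h1 : (0:ℝ) < m + 1 := by linarith
  have h2 : (0:ℝ) < m + (n:ℝ) + 1 := by positivity
  have : (R/2)/(m + (n:ℝ) + 1) ≤ (R/2)/(m+1) :=
    div_le_div_of_nonneg_left hbase.le h1 (by linarith) |>.trans_eq rfl
  calc bterm m R n * ((R/2)/(m + n + 1)) ≤ bterm m R n * ((R/2)/(m+1)) :=
        mul_le_mul_of_nonneg_left this (bterm_pos hm hR n).le
    _ = (R/2)/(m+1) * bterm m R n := by ring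

lemma besselI_three_half_lt {R : ℝ} (hR : 0 < R) :
    besselI (3/2) R < R/3 * besselI (1/2) R := by
  have h12 : (0:ℝ) ≤ (1:ℝ)/2 := by norm_num
  have key : besselI ((1:ℝ)/2 + 1) R < (R/2)/((1:ℝ)/2+1) * besselI (1/2) R := by
    rw [besselI_eq, besselI_eq, ← tsum_mul_left]
    apply Summable.tsum_lt_tsum (i := 1) _ _ (bterm_summable (by norm_num) hR)
      ((bterm_summable h12 hR).mul_left _)
    · intro n
      rw [bterm_succ h12 hR n]
      have h2 : (0:ℝ) < 1/2 + (n:ℝ) + 1 := by positivity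
      have : (R/2)/((1:ℝ)/2 + (n:ℝ) + 1) ≤ (R/2)/((1:ℝ)/2+1) :=
        div_le_div_of_nonneg_left (by linarith) (by norm_num) (by linarith)
      calc bterm (1/2) R n * ((R/2)/(1/2 + (n:ℝ) + 1)) ≤ bterm (1/2) R n * ((R/2)/(1/2+1)) :=
            mul_le_mul_of_nonneg_left this (bterm_pos h12 hR n).le
        _ = (R/2)/(1/2+1) * bterm (1/2) R n := by ring
    · rw [bterm_succ h12 hR 1]
      have : (R/2)/((1:ℝ)/2 + (1:ℕ) + 1) < (R/2)/((1:ℝ)/2+1) := by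
        apply div_lt_div_of_pos_left (by linarith) (by norm_num) (by push_cast; norm_num)
      calc bterm (1/2) R 1 * ((R/2)/(1/2 + (1:ℕ) + 1)) < bterm (1/2) R 1 * ((R/2)/(1/2+1)) :=
            mul_lt_mul_of_pos_left this (bterm_pos h12 hR 1)
        _ = (R/2)/(1/2+1) * bterm (1/2) R 1 := by ring
  have e1 : (1:ℝ)/2 + 1 = 3/2 := by norm_num
  have e2 : (R/2)/((1:ℝ)/2+1) = R/3 := by ring
  rwa [e1, show R/2/((3:ℝ)/2) = R/3 by ring] at key
/-- `h_k(R) = ((k²+k)/2 - 1)·I_{k+3/2}(R)/(R·I_{k+1/2}(R))`. -/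
noncomputable def hfun (k : ℕ) (R : ℝ) : ℝ :=
  (((k : ℝ) ^ 2 + k) / 2 - 1) * (besselI ((k : ℝ) + 3 / 2) R / (R * besselI ((k : ℝ) + 1 / 2) R))

/-- `j_k(R) = 1 - 3 I_{3/2}(R)/(R I_{1/2}(R)) - I_{3/2}(R) I_{k+3/2}(R)/(I_{1/2}(R) I_{k+1/2}(R))`. -/
noncomputable def jfun (k : ℕ) (R : ℝ) : ℝ :=
  1 - 3 * besselI (3 / 2) R / (R * besselI (1 / 2) R)
    - besselI (3 / 2) R * besselI ((k : ℝ) + 3 / 2) R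
      / (besselI (1 / 2) R * besselI ((k : ℝ) + 1 / 2) R)

/-- `γ_k(R) = j_k(R)·R/(h_k(R) + j_k(R))`. -/
noncomputable def gammafun (k : ℕ) (R : ℝ) : ℝ :=
  jfun k R * R / (hfun k R + jfun k R)

private lemma arith_pos {e b q kk R : ℝ} (hk : 0 < kk) (hR : 0 < R)
    (h1 : R^2 ≤ e*kk) (h2 : b*(q*kk) ≤ (R/3)*(R/2)) : 0 < e - b*q := by
  have hR2 : (0:ℝ) < R^2 := pow_pos hR 2
  have h3 : 0 < (e - b*q)*kk := by nlinarith
  rcases mul_pos_iff.mp h3 with ⟨h,_⟩ | ⟨_,hneg⟩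
  · exact h
  · linarith

lemma key (R : ℝ) (hR : 0 < R) (k : ℕ) (hkR : R + 2 ≤ (k:ℝ)) :
    gammafun k R ≤ R ∧
      (R^2 ≤ (1 - 3*(besselI (3/2) R / besselI (1/2) R)/R) * (k:ℝ) → 0 < gammafun k R) := by
  have hA : 0 < besselI (1/2) R := besselI_pos (by norm_num) hR
  have hB : 0 < besselI (3/2) R := besselI_pos (by norm_num) hR
  have hP : 0 < besselI ((k:ℝ)+1/2) R := besselI_pos (by positivity) hR
  have hQ : 0 < besselI ((k:ℝ)+3/2) R := besselI_pos (by positivity) hR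
  set A := besselI (1/2) R with hAdef
  set B := besselI (3/2) R with hBdef
  set P := besselI ((k:ℝ)+1/2) R with hPdef
  set Q := besselI ((k:ℝ)+3/2) R with hQdef
  have hBA : B < R/3 * A := besselI_three_half_lt hR
  have hQP : Q ≤ (R/2)/((k:ℝ)+3/2) * P := by
    have := besselI_succ_le (m := (k:ℝ)+1/2) (by positivity) hR
    rw [show (k:ℝ)+1/2+1 = (k:ℝ)+3/2 by ring] at this
    exact this
  set b := B / A with hbdef
  set q := Q / P with hqdef
  set c := ((k:ℝ)^2 + (k:ℝ))/2 - 1 with hcdef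
  set ε := 1 - 3*b/R with hεdef
  have hhf : hfun k R = (c/R) * q := by
    rw [hfun, hcdef, hqdef, ← hPdef, ← hQdef]
    ring
  have hjf : jfun k R = ε - b * q := by
    rw [jfun, hεdef, hbdef, hqdef, ← hAdef, ← hBdef, ← hPdef, ← hQdef]
    ring
  have hgf : gammafun k R = jfun k R * R / (hfun k R + jfun k R) := rfl
  have hb0 : 0 < b := div_pos hB hA
  have hq0 : 0 < q := div_pos hQ hP
  have hb : b < R/3 := by rw [hbdef, div_lt_iff₀ hA]; linarith
  have hε : 0 < ε := by
    have h1 : 3*b < R := by linarith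
    have : 3*b/R < 1 := (div_lt_one hR).mpr h1
    rw [hεdef]; linarith
  have hqle : q * ((k:ℝ)+3/2) ≤ R/2 := by
    rw [hqdef, div_mul_eq_mul_div, div_le_iff₀ hP]
    calc Q * ((k:ℝ)+3/2) ≤ ((R/2)/((k:ℝ)+3/2) * P) * ((k:ℝ)+3/2) := by
          apply mul_le_mul_of_nonneg_right hQP (by positivity)
      _ = R/2 * P := by field_simp
  have hkpos : (0:ℝ) < (k:ℝ) := by linarith
  have hεkdef : (1 - 3*(besselI (3/2) R / besselI (1/2) R)/R) = ε := by
    rw [hεdef, hbdef, hAdef, hBdef]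
  clear_value A B P Q b q c ε
  clear hAdef hBdef hPdef hQdef hbdef hqdef hεdef
  have hc : R^2/2 ≤ c := by rw [hcdef]; nlinarith
  have hcR : R/2 ≤ c/R := by rw [le_div_iff₀ hR]; nlinarith
  have hcR0 : 0 < c/R := by linarith
  have hden : 0 < hfun k R + jfun k R := by
    rw [hhf, hjf]
    have h1 : b*q ≤ (c/R)*q := mul_le_mul_of_nonneg_right (by linarith) hq0.le
    linarith
  constructor
  · rw [hgf, div_le_iff₀ hden, hhf, hjf]
    have hh : 0 ≤ R*((c/R)*q) := by positivity
    nlinarith [hh]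
  · intro hεk

    have hqk : q*(k:ℝ) ≤ R/2 := by nlinarith [hq0]
    have h2 : b*(q*(k:ℝ)) ≤ (R/3)*(R/2) :=
      mul_le_mul hb.le hqk (by positivity) (by linarith)
    have hj : 0 < jfun k R := by
      rw [hjf]
      exact arith_pos hkpos hR hεk h2
    rw [hgf]
    exact div_pos (mul_pos hj hR) hden

/-- The set `{γ_k(R) : k ≥ 2}` is bounded above and its supremum
`γ*(R)` is strictly positive. -/
theorem stmt13 (R : ℝ) (hR : 0 < R) :
    BddAbove {x : ℝ | ∃ k : ℕ, 2 ≤ k ∧ x = gammafun k R} ∧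
    0 < sSup {x : ℝ | ∃ k : ℕ, 2 ≤ k ∧ x = gammafun k R} := by
  set S := {x : ℝ | ∃ k : ℕ, 2 ≤ k ∧ x = gammafun k R} with hS
  set K := ⌈R⌉₊ + 3 with hK
  have hKR : R + 2 ≤ (K:ℝ) := by
    have := Nat.le_ceil R
    push_cast [hK]
    linarith
  have hbdd : BddAbove S := by
    refine ⟨R + ∑ i ∈ Finset.range K, |gammafun i R|, ?_⟩
    rintro x ⟨k, hk2, rfl⟩
    by_cases hk : k < K
    · have h1 : |gammafun k R| ≤ ∑ i ∈ Finset.range K, |gammafun i R| :=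
        Finset.single_le_sum (f := fun i => |gammafun i R|) (fun i _ => abs_nonneg _) (Finset.mem_range.mpr hk)
      have := le_abs_self (gammafun k R)
      linarith
    · push_neg at hk
      have hkR : R + 2 ≤ (k:ℝ) := hKR.trans (by exact_mod_cast hk)
      have h1 : (0:ℝ) ≤ ∑ i ∈ Finset.range K, |gammafun i R| :=
        Finset.sum_nonneg (fun i _ => abs_nonneg _)
      have := (key R hR k hkR).1
      linarith
  refine ⟨hbdd, ?_⟩
  have hA : 0 < besselI (1/2) R := besselI_pos (by norm_num) hR
  have hBA : besselI (3/2) R < R/3 * besselI (1/2) R := besselI_three_half_lt hR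
  set ε := 1 - 3*(besselI (3/2) R / besselI (1/2) R)/R with hεdef
  have hε : 0 < ε := by
    have hb : besselI (3/2) R / besselI (1/2) R < R/3 := by
      rw [div_lt_iff₀ hA]; linarith
    have h1 : 3*(besselI (3/2) R / besselI (1/2) R) < R := by linarith
    have : 3*(besselI (3/2) R / besselI (1/2) R)/R < 1 := (div_lt_one hR).mpr h1
    rw [hεdef]; linarith
  set k₀ := K + ⌈R^2/ε⌉₊ with hk₀
  have hk₀R : R + 2 ≤ (k₀:ℝ) := by
    have : (K:ℝ) ≤ (k₀:ℝ) := by exact_mod_cast Nat.le_add_right K _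
    linarith
  have hεk : R^2 ≤ ε * (k₀:ℝ) := by
    have h1 : R^2/ε ≤ (⌈R^2/ε⌉₊ : ℝ) := Nat.le_ceil _
    have h2 : (⌈R^2/ε⌉₊ : ℝ) ≤ (k₀:ℝ) := by exact_mod_cast Nat.le_add_left _ K
    have := (div_le_iff₀ hε).mp (h1.trans h2)
    linarith
  have hpos : 0 < gammafun k₀ R := (key R hR k₀ hk₀R).2 hεk
  have hmem : gammafun k₀ R ∈ S := ⟨k₀, by omega, rfl⟩
  exact lt_of_lt_of_le hpos (le_csSup hbdd hmem)
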